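/- Let γ > 0, let W : [0,∞) → [0,1/γ] be nondecreasing with W(y) → 1/γ as y → ∞, and let R : (0,∞) → (0,∞) be continuous with ∫^∞ dx/R(x) < ∞. Define m(b) = ∫_b^∞ W(x−b)/R(x) dx and φ(b) = (1/γ)∫_b^∞ dx/R(x). If limsup_{h→1+} liminf_{x→∞} φ(hx)/φ(x) = 1, then m(b)/φ(b) → 1 as b → ∞. -/

import Mathlib

open MeasureTheory Set Filter

theorem stmt7 (γ : ℝ) (hγ : 0 < γ) (W R : ℝ → ℝ)
    (hWmono : MonotoneOn W (Ici 0)) (hW0 : ∀ x, 0 ≤ x → 0 ≤ W x)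
    (hWbd : ∀ x, 0 ≤ x → W x ≤ 1 / γ)
    (hWlim : Tendsto W atTop (nhds (1 / γ)))
    (hWneg : ∀ x, x < 0 → W x = 0)
    (hRcont : ContinuousOn R (Ioi 0)) (hRpos : ∀ x, 0 < x → 0 < R x)
    (hRint : ∀ b, 0 < b → IntegrableOn (fun x => 1 / R x) (Ioi b))
    (m φ : ℝ → ℝ)
    (hm : ∀ b, 0 < b → m b = ∫ x in Ioi b, W (x - b) / R x)
    (hφ : ∀ b, 0 < b → φ b = (1 / γ) * ∫ x in Ioi b, 1 / R x)
    (hH1 : Filter.limsup (fun h : ℝ => Filter.liminf (fun x => φ (h * x) / φ x) atTop)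
      (nhdsWithin 1 (Ioi 1)) = 1) :
    Tendsto (fun b => m b / φ b) atTop (nhds 1) := by
  -- W is nonnegative everywhere and monotone on all of ℝ
  have hWnn : ∀ y, 0 ≤ W y := by
    intro y
    rcases lt_or_ge y 0 with hy | hy
    · rw [hWneg y hy]
    · exact hW0 y hy
  have hWbd' : ∀ y, W y ≤ 1 / γ := by
    intro y
    rcases lt_or_ge y 0 with hy | hy
    · rw [hWneg y hy]; positivity
    · exact hWbd y hy
  have hWmonoR : Monotone W := by
    intro x y hxy
    rcases lt_or_ge x 0 with hx | hx
    · rw [hWneg x hx]; exact hWnn y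
    · exact hWmono hx (hx.trans hxy) hxy
  have hWmeas : Measurable W := hWmonoR.measurable
  -- integrability of the integrand of m
  have hInt : ∀ b : ℝ, 0 < b → IntegrableOn (fun x => W (x - b) / R x) (Ioi b) := by
    intro b hb
    have h1 : IntegrableOn (fun x => W (x - b) * (1 / R x)) (Ioi b) := by
      refine (hRint b hb).bdd_mul ?_ (c := 1 / γ) (ae_of_all _ fun x => ?_)
      · exact (hWmeas.comp (measurable_id.sub_const b)).aestronglyMeasurable
      · rw [Real.norm_eq_abs, abs_of_nonneg (hWnn _)]; exact hWbd' _
    simpa only [mul_one_div] using h1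
  -- positivity of the tail integral and of φ
  have hIpos : ∀ b : ℝ, 0 < b → 0 < ∫ x in Ioi b, 1 / R x := by
    intro b hb
    rw [setIntegral_pos_iff_support_of_nonneg_ae ?_ (hRint b hb)]
    · have hsub : Ioi b ⊆ Function.support (fun x => 1 / R x) ∩ Ioi b := fun x hx =>
        ⟨one_div_ne_zero (hRpos x (hb.trans hx)).ne', hx⟩
      calc (0 : ENNReal) < volume (Ioi b) := by
              rw [Real.volume_Ioi]; exact ENNReal.zero_lt_top
        _ ≤ _ := measure_mono hsub
    · refine (ae_restrict_iff' measurableSet_Ioi).2 (ae_of_all _ fun x hx => ?_)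
      exact (one_div_pos.2 (hRpos x (hb.trans hx))).le
  have hφpos : ∀ b : ℝ, 0 < b → 0 < φ b := by
    intro b hb
    rw [hφ b hb]
    have := hIpos b hb
    positivity
  have hmnn : ∀ b : ℝ, 0 < b → 0 ≤ m b := by
    intro b hb
    rw [hm b hb]
    refine setIntegral_nonneg measurableSet_Ioi fun x hx => ?_
    exact div_nonneg (hWnn _) (hRpos x (hb.trans hx)).le
  -- upper bound: m b ≤ φ b
  have hmle : ∀ b : ℝ, 0 < b → m b ≤ φ b := by
    intro b hb
    rw [hm b hb, hφ b hb, ← integral_const_mul]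
    refine setIntegral_mono_on (hInt b hb) ((hRint b hb).const_mul _) measurableSet_Ioi
      fun x hx => ?_
    rw [mul_one_div]
    exact (div_le_div_iff_of_pos_right (hRpos x (hb.trans hx))).2 (hWbd' _)
  -- lower bound: m b ≥ W((h-1)b) * γ * φ(hb)
  have hlow : ∀ h : ℝ, 1 < h → ∀ b : ℝ, 0 < b →
      W ((h - 1) * b) * (γ * φ (h * b)) ≤ m b := by
    intro h hh b hb
    have hhb : b < h * b := by nlinarith
    have hhb0 : 0 < h * b := hb.trans hhb
    have step1 : ∫ x in Ioi (h * b), W (x - b) / R x ≤ m b := by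
      rw [hm b hb]
      refine setIntegral_mono_set (hInt b hb) ?_
        (HasSubset.Subset.eventuallyLE (Ioi_subset_Ioi hhb.le))
      refine (ae_restrict_iff' measurableSet_Ioi).2 (ae_of_all _ fun x hx => ?_)
      exact div_nonneg (hWnn _) (hRpos x (hb.trans hx)).le
    have hIeq : γ * φ (h * b) = ∫ x in Ioi (h * b), 1 / R x := by
      rw [hφ (h * b) hhb0]; field_simp
    have step2 : W ((h - 1) * b) * (γ * φ (h * b)) ≤ ∫ x in Ioi (h * b), W (x - b) / R x := by
      rw [hIeq, ← integral_const_mul]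
      refine setIntegral_mono_on ((hRint (h * b) hhb0).const_mul _)
        ((hInt b hb).mono_set (Ioi_subset_Ioi hhb.le)) measurableSet_Ioi fun x hx => ?_
      rw [mul_one_div]
      refine (div_le_div_iff_of_pos_right (hRpos x (hhb0.trans hx))).2 (hWmonoR ?_)
      have := mem_Ioi.1 hx
      linarith
    linarith
  -- ratio lower bound
  have hratio : ∀ h : ℝ, 1 < h → ∀ b : ℝ, 0 < b →
      γ * W ((h - 1) * b) * (φ (h * b) / φ b) ≤ m b / φ b := by
    intro h hh b hb
    have h1 := hlow h hh b hb
    have h2 := hφpos b hb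
    have heq : γ * W ((h - 1) * b) * (φ (h * b) / φ b)
        = (W ((h - 1) * b) * (γ * φ (h * b))) / φ b := by
      field_simp
    rw [heq]
    exact (div_le_div_iff_of_pos_right h2).2 h1
  -- φ is antitone on positives
  have hφanti : ∀ a b : ℝ, 0 < a → a ≤ b → φ b ≤ φ a := by
    intro a b ha hab
    rw [hφ a ha, hφ b (ha.trans_le hab)]
    refine mul_le_mul_of_nonneg_left ?_ (by positivity)
    refine setIntegral_mono_set (hRint a ha) ?_
      (HasSubset.Subset.eventuallyLE (Ioi_subset_Ioi hab))
    refine (ae_restrict_iff' measurableSet_Ioi).2 (ae_of_all _ fun x hx => ?_)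
    exact (one_div_pos.2 (hRpos x (ha.trans hx))).le
  have hratio01 : ∀ h : ℝ, 1 < h → ∀ b : ℝ, 0 < b →
      0 < φ (h * b) / φ b ∧ φ (h * b) / φ b ≤ 1 := by
    intro h hh b hb
    have hhb : b ≤ h * b := by nlinarith
    refine ⟨div_pos (hφpos (h * b) (by nlinarith)) (hφpos b hb), ?_⟩
    exact (div_le_one (hφpos b hb)).2 (hφanti b (h * b) hb hhb)
  -- the key consequence of H1
  have hkey : ∀ δ : ℝ, 0 < δ → ∃ h : ℝ, 1 < h ∧
      ∀ᶠ b in atTop, 1 - δ < φ (h * b) / φ b := by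
    intro δ hδ
    set L : ℝ → ℝ := fun h => liminf (fun x => φ (h * x) / φ x) atTop with hLdef
    have hL0 : ∀ h : ℝ, 1 < h → 0 ≤ L h := by
      intro h hh
      refine le_liminf_of_le ?_ ?_
      · exact isCoboundedUnder_ge_of_eventually_le _
          ((eventually_gt_atTop 0).mono fun x hx => (hratio01 h hh x hx).2)
      · exact (eventually_gt_atTop 0).mono fun x hx => (hratio01 h hh x hx).1.le
    have hfreq : ∃ᶠ h in nhdsWithin 1 (Ioi 1), 1 - δ < L h := by
      by_contra hc
      rw [not_frequently] at hc
      have hc' : ∀ᶠ h in nhdsWithin 1 (Ioi 1), L h ≤ 1 - δ :=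
        hc.mono fun h hh => not_lt.1 hh
      have hls : limsup L (nhdsWithin 1 (Ioi 1)) ≤ 1 - δ :=
        limsup_le_of_le (isCoboundedUnder_le_of_eventually_le _
          (eventually_mem_nhdsWithin.mono fun h hh => hL0 h hh)) hc'
      rw [hH1] at hls
      linarith
    obtain ⟨h, hlt, hmem⟩ := (hfreq.and_eventually eventually_mem_nhdsWithin).exists
    refine ⟨h, hmem, ?_⟩
    refine eventually_lt_of_lt_liminf hlt ?_
    exact ⟨0, eventually_map.2 ((eventually_gt_atTop 0).mono
      fun x hx => (hratio01 h hmem x hx).1.le)⟩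
  -- γ * W((h-1)b) tends to 1
  have hWt : ∀ h : ℝ, 1 < h → Tendsto (fun b => γ * W ((h - 1) * b)) atTop (nhds 1) := by
    intro h hh
    have h1 : Tendsto (fun b : ℝ => (h - 1) * b) atTop atTop :=
      tendsto_id.const_mul_atTop (by linarith)
    have h2 := (hWlim.comp h1).const_mul γ
    have h3 : γ * (1 / γ) = 1 := by field_simp
    rw [h3] at h2
    exact h2
  -- conclusion
  rw [Metric.tendsto_nhds]
  intro ε hε
  set δ := min (ε / 2) (1 / 2) with hδdef
  have hδ : 0 < δ := lt_min (by linarith) (by norm_num)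
  have hδ2 : δ ≤ 1 / 2 := min_le_right _ _
  have hδε : δ ≤ ε / 2 := min_le_left _ _
  obtain ⟨h, hh1, hev1⟩ := hkey δ hδ
  have hev2 : ∀ᶠ b in atTop, 1 - δ < γ * W ((h - 1) * b) :=
    (hWt h hh1).eventually (eventually_gt_nhds (by linarith))
  filter_upwards [hev1, hev2, eventually_gt_atTop 0] with b h1 h2 hb
  have hub : m b / φ b ≤ 1 := (div_le_one (hφpos b hb)).2 (hmle b hb)
  have hprod : (1 - δ) * (1 - δ) ≤ γ * W ((h - 1) * b) * (φ (h * b) / φ b) :=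
    mul_le_mul h2.le h1.le (by linarith) (mul_nonneg hγ.le (hWnn _))
  have hlb := hratio h hh1 b hb
  rw [Real.dist_eq, abs_sub_lt_iff]
  constructor
  · linarith
  · nlinarith [mul_pos hδ hδ]
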